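/- Strict version of the first case of the discrete monotonicity rule: if ρ is strictly increasing on [a+1,b] (ρ(n) < ρ(n+1) whenever a+1 ≤ n ≤ n+1 ≤ b) and g(n)·Δg(n) > 0 for all n ∈ [a+1,b], then there exists k ∈ [a,b] such that r is strictly decreasing on [a,k] (r(n−1) > r(n) for all n with a+1 ≤ n ≤ k) and strictly increasing on [k+1,b] (r(n−1) < r(n) for all n with k+2 ≤ n ≤ b). -/

import Mathlib

/-- Strict version of the first case of the discrete monotonicity rule. -/
theorem discrete_lhospital_monotone_rule_strict
    (a b : ℤ) (hab : a ≤ b) (f g : ℤ → ℝ)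
    (hg : ∀ n : ℤ, a ≤ n → n ≤ b → g n ≠ 0)
    (hgsign : ∀ n m : ℤ, a ≤ n → n ≤ b → a ≤ m → m ≤ b → 0 < g n * g m)
    (hΔg : ∀ n : ℤ, a + 1 ≤ n → n ≤ b → g n - g (n - 1) ≠ 0)
    (hΔgsign : ∀ n m : ℤ, a + 1 ≤ n → n ≤ b → a + 1 ≤ m → m ≤ b →
      0 < (g n - g (n - 1)) * (g m - g (m - 1)))
    (hρ : ∀ n : ℤ, a + 1 ≤ n → n + 1 ≤ b →
      (f n - f (n - 1)) / (g n - g (n - 1)) < (f (n + 1) - f n) / (g (n + 1) - g n))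
    (hgΔg : ∀ n : ℤ, a + 1 ≤ n → n ≤ b → 0 < g n * (g n - g (n - 1))) :
    ∃ k : ℤ, a ≤ k ∧ k ≤ b ∧
      (∀ n : ℤ, a + 1 ≤ n → n ≤ k → f n / g n < f (n - 1) / g (n - 1)) ∧
      (∀ n : ℤ, k + 2 ≤ n → n ≤ b → f (n - 1) / g (n - 1) < f n / g n) := by
  classical
  -- positivity of Δg n / g n and Δg n / g (n-1)
  have c1pos : ∀ n : ℤ, a + 1 ≤ n → n ≤ b → 0 < (g n - g (n - 1)) / g n := by
    intro n h1 h2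
    have hgn := hg n (by linarith) h2
    have h := hgΔg n h1 h2
    have hsq : (0:ℝ) < g n ^ 2 := pow_two_pos_of_ne_zero hgn
    have : (g n - g (n - 1)) / g n = g n * (g n - g (n - 1)) / g n ^ 2 := by
      field_simp
    rw [this]
    exact div_pos h hsq
  have c2pos : ∀ n : ℤ, a + 1 ≤ n → n ≤ b → 0 < (g n - g (n - 1)) / g (n - 1) := by
    intro n h1 h2
    have hgn1 := hg (n - 1) (by linarith) (by linarith)
    have h := hgΔg n h1 h2
    have hs := hgsign n (n - 1) (by linarith) h2 (by linarith) (by linarith)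
    have hsq : (0:ℝ) < g (n - 1) ^ 2 := pow_two_pos_of_ne_zero hgn1
    have hp : 0 < g (n - 1) * (g n - g (n - 1)) := by nlinarith
    have : (g n - g (n - 1)) / g (n - 1) = g (n - 1) * (g n - g (n - 1)) / g (n - 1) ^ 2 := by
      field_simp
    rw [this]
    exact div_pos hp hsq
  -- key identities
  have key1 : ∀ n : ℤ, a + 1 ≤ n → n ≤ b →
      f n / g n - f (n - 1) / g (n - 1) =
        ((g n - g (n - 1)) / g n) *
          ((f n - f (n - 1)) / (g n - g (n - 1)) - f (n - 1) / g (n - 1)) := by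
    intro n h1 h2
    have hgn := hg n (by linarith) h2
    have hgn1 := hg (n - 1) (by linarith) (by linarith)
    have hΔ := hΔg n h1 h2
    field_simp
    ring
  have key2 : ∀ n : ℤ, a + 1 ≤ n → n ≤ b →
      f n / g n - f (n - 1) / g (n - 1) =
        ((g n - g (n - 1)) / g (n - 1)) *
          ((f n - f (n - 1)) / (g n - g (n - 1)) - f n / g n) := by
    intro n h1 h2
    have hgn := hg n (by linarith) h2
    have hgn1 := hg (n - 1) (by linarith) (by linarith)
    have hΔ := hΔg n h1 h2
    field_simp
    ring
  -- propagation
  have prop : ∀ n : ℤ, a + 1 ≤ n → n + 1 ≤ b →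
      f (n - 1) / g (n - 1) ≤ f n / g n → f n / g n < f (n + 1) / g (n + 1) := by
    intro n h1 h2 hle
    have k2 := key2 n h1 (by linarith)
    have c2 := c2pos n h1 (by linarith)
    have hx : 0 ≤ (f n - f (n - 1)) / (g n - g (n - 1)) - f n / g n := by
      by_contra hneg
      push_neg at hneg
      have := mul_neg_of_pos_of_neg c2 hneg
      rw [← k2] at this
      linarith
    have hρn := hρ n h1 h2
    have k1 := key1 (n + 1) (by linarith) h2
    have c1 := c1pos (n + 1) (by linarith) h2
    have hsimp : (n + 1 : ℤ) - 1 = n := by ring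
    rw [hsimp] at k1 c1
    have hpos : 0 < (f (n + 1) - f n) / (g (n + 1) - g n) - f n / g n := by linarith
    have := mul_pos c1 hpos
    rw [← k1] at this
    linarith
  by_cases hE : ∃ n : ℤ, (a + 1 ≤ n ∧ n ≤ b) ∧ f (n - 1) / g (n - 1) ≤ f n / g n
  · obtain ⟨n₀, hn₀, hmin⟩ := Int.exists_least_of_bdd
      (P := fun n => (a + 1 ≤ n ∧ n ≤ b) ∧ f (n - 1) / g (n - 1) ≤ f n / g n)
      ⟨a + 1, fun z hz => hz.1.1⟩ hE
    obtain ⟨⟨hn₀1, hn₀2⟩, hn₀le⟩ := hn₀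
    refine ⟨n₀ - 1, by linarith, by linarith, ?_, ?_⟩
    · intro n h1 h2
      by_contra hcon
      push_neg at hcon
      have := hmin n ⟨⟨h1, by linarith⟩, hcon⟩
      linarith
    · -- show ∀ m ≥ n₀ + 1, m ≤ b → r (m-1) < r m
      have main : ∀ m : ℤ, n₀ + 1 ≤ m → m ≤ b → f (m - 1) / g (m - 1) < f m / g m := by
        refine Int.le_induction (motive := fun m _ => m ≤ b → f (m - 1) / g (m - 1) < f m / g m) ?_ ?_
        · intro hb'
          have := prop n₀ hn₀1 (by linarith) hn₀le
          simpa using this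
        · intro m hm' ih hb'
          have hrec := ih (by linarith)
          have := prop m (by linarith) (by linarith) (le_of_lt hrec)
          simpa using this
      intro n h1 h2
      exact main n (by linarith) h2
  · push_neg at hE
    refine ⟨b, hab, le_refl b, ?_, ?_⟩
    · intro n h1 h2
      exact hE n ⟨h1, h2⟩
    · intro n h1 h2
      linarith
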